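/- Let δ ∈ [0,1) and fix k ∈ ℕ. Then, for ξ = 0, p_DGPD(k; σ, 0) / f_GPD(k + δ; σ, 0) = σ·e^{δ/σ}·(1 − e^{−1/σ}) for every σ > 0 (independently of k), and as σ → ∞, σ·e^{δ/σ}·(1 − e^{−1/σ}) = 1 + (2δ − 1)/(2σ) + O(σ^{−2}). In particular the first-order term vanishes exactly when δ = 1/2. -/

import Mathlib

/-- GPD density with `ξ = 0`: `f_GPD(x; σ, 0) = σ⁻¹ e^(-x/σ)`. -/
noncomputable def fGPD0 (σ x : ℝ) : ℝ := σ⁻¹ * Real.exp (-x / σ)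

/-- D-GPD probability mass function with `ξ = 0`:
`p_DGPD(k; σ, 0) = e^(-k/σ) - e^(-(k+1)/σ)`. -/
noncomputable def pDGPD0 (σ : ℝ) (k : ℕ) : ℝ :=
  Real.exp (-(k : ℝ) / σ) - Real.exp (-((k : ℝ) + 1) / σ)

/-- Cubic Taylor bound for `e^{-t}` on `(0,1]`. -/
lemma aux_exp3 (t : ℝ) (ht : 0 < t) (ht1 : t ≤ 1) :
    |Real.exp (-t) - (1 - t + t^2/2)| ≤ (2/9) * t^3 := by
  have hx : |(-t)| ≤ 1 := by rw [abs_neg, abs_of_pos ht]; exact ht1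
  have h := Real.exp_bound hx (n := 3) (by norm_num)
  have hsum : (∑ m ∈ Finset.range 3, (-t) ^ m / m.factorial) = 1 - t + t^2/2 := by
    simp [Finset.sum_range_succ, Nat.factorial]
    ring
  rw [hsum] at h
  have habs : |(-t)| = t := by rw [abs_neg, abs_of_pos ht]
  rw [habs] at h
  refine h.trans ?_
  norm_num [Nat.factorial]
  nlinarith [pow_pos ht 3]

/-- Main estimate in the variable `t = 1/σ`. -/
lemma aux_main (δ t : ℝ) (h0 : 0 ≤ δ) (h1 : δ ≤ 1) (ht : 0 < t) (ht1 : t ≤ 1) :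
    |Real.exp (δ*t) * (1 - Real.exp (-t)) / t - (1 + (2*δ-1)*t/2)| ≤ 3 * t^2 := by
  have ht2 : t^2 ≤ t := by nlinarith
  have ht3 : t^3 ≤ t := by nlinarith [sq_nonneg t]
  set s := Real.exp (δ*t) - 1 - δ*t with hs_def
  set u := Real.exp (-t) - (1 - t + t^2/2) with hu_def
  have hs : |s| ≤ t^2 := by
    have hx : |δ*t| ≤ 1 := by
      rw [abs_of_nonneg (mul_nonneg h0 ht.le)]; nlinarith
    have h := Real.abs_exp_sub_one_sub_id_le hx
    calc |s| ≤ (δ*t)^2 := h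
      _ = δ^2 * t^2 := by ring
      _ ≤ 1 * t^2 := by
          have hδ2 : δ^2 ≤ 1 := by nlinarith
          nlinarith [mul_le_mul_of_nonneg_right hδ2 (sq_nonneg t)]
      _ = t^2 := one_mul _
  have hu : |u| ≤ (2/9) * t^3 := aux_exp3 t ht ht1
  have hexp1 : Real.exp (δ*t) = 1 + δ*t + s := by rw [hs_def]; ring
  have hexp2 : Real.exp (-t) = 1 - t + t^2/2 + u := by rw [hu_def]; ring
  have key : Real.exp (δ*t) * (1 - Real.exp (-t)) / t - (1 + (2*δ-1)*t/2)
      = ((-u) + (-(δ*t^3/2)) + (-(δ*t*u)) + s*(t - t^2/2 - u)) / t := by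
    rw [hexp1, hexp2]
    field_simp
    ring
  have h4 : |t - t^2/2 - u| ≤ 2*t := by
    rw [abs_le] at hu ⊢
    constructor <;> nlinarith [hu.1, hu.2]
  have hA : |s*(t - t^2/2 - u)| ≤ t^2 * (2*t) := by
    rw [abs_mul]; exact mul_le_mul hs h4 (abs_nonneg _) (sq_nonneg t)
  have hB : |(-(δ*t*u))| ≤ (2/9)*t^3 := by
    rw [abs_neg, abs_mul]
    calc |δ*t| * |u| ≤ 1 * ((2/9)*t^3) := by
          apply mul_le_mul _ hu (abs_nonneg _) zero_le_one
          rw [abs_of_nonneg (mul_nonneg h0 ht.le)]; nlinarith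
      _ = (2/9)*t^3 := one_mul _
  have hC : |(-(δ*t^3/2))| ≤ t^3/2 := by
    rw [abs_neg, abs_of_nonneg (by positivity)]
    nlinarith [pow_pos ht 3]
  have hnum : |(-u) + (-(δ*t^3/2)) + (-(δ*t*u)) + s*(t - t^2/2 - u)| ≤ 3 * t^3 := by
    calc |(-u) + (-(δ*t^3/2)) + (-(δ*t*u)) + s*(t - t^2/2 - u)|
        ≤ |(-u) + (-(δ*t^3/2)) + (-(δ*t*u))| + |s*(t - t^2/2 - u)| := abs_add_le _ _
      _ ≤ (|(-u) + (-(δ*t^3/2))| + |(-(δ*t*u))|) + |s*(t - t^2/2 - u)| := by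
          exact add_le_add (abs_add_le _ _) le_rfl
      _ ≤ ((|(-u)| + |(-(δ*t^3/2))|) + |(-(δ*t*u))|) + |s*(t - t^2/2 - u)| := by
          exact add_le_add (add_le_add (abs_add_le _ _) le_rfl) le_rfl
      _ ≤ (((2/9)*t^3 + t^3/2) + (2/9)*t^3) + t^2*(2*t) := by
          rw [abs_neg]
          exact add_le_add (add_le_add (add_le_add hu hC) hB) hA
      _ ≤ 3 * t^3 := by nlinarith [pow_pos ht 3]
  rw [key, abs_div, abs_of_pos ht, div_le_iff₀ ht]
  calc |(-u) + (-(δ*t^3/2)) + (-(δ*t*u)) + s*(t - t^2/2 - u)| ≤ 3*t^3 := hnum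
    _ = 3*t^2*t := by ring

/-- For `ξ = 0`, `δ ∈ [0,1)` and fixed `k ∈ ℕ`: for every `σ > 0`,
`p_DGPD(k;σ,0)/f_GPD(k+δ;σ,0) = σ·e^(δ/σ)·(1 - e^(-1/σ))` (independently of `k`), and
as `σ → ∞`, `σ·e^(δ/σ)·(1 - e^(-1/σ)) = 1 + (2δ-1)/(2σ) + O(σ⁻²)`; the first-order
term vanishes exactly when `δ = 1/2`. -/
theorem pDGPD0_continuity_correction_expansion
    (δ : ℝ) (hδ : δ ∈ Set.Ico (0:ℝ) 1) (k : ℕ) :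
    (∀ σ > (0:ℝ),
      pDGPD0 σ k / fGPD0 σ ((k : ℝ) + δ)
        = σ * Real.exp (δ / σ) * (1 - Real.exp (-1 / σ))) ∧
    (∃ C > (0:ℝ), ∃ σ₀ : ℝ, ∀ σ ≥ σ₀,
      |σ * Real.exp (δ / σ) * (1 - Real.exp (-1 / σ))
          - (1 + (2 * δ - 1) / (2 * σ))| ≤ C / σ ^ 2) ∧
    (2 * δ - 1 = 0 ↔ δ = 1 / 2) := by
  obtain ⟨h0, h1⟩ := hδ
  refine ⟨?_, ⟨3, by norm_num, 1, ?_⟩, by constructor <;> intro h <;> linarith⟩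
  · intro σ hσ
    have hσ' : σ ≠ 0 := hσ.ne'
    have e1 : Real.exp (δ/σ) * Real.exp (-((k:ℝ)+δ)/σ) = Real.exp (-(k:ℝ)/σ) := by
      rw [← Real.exp_add]; congr 1; field_simp; ring
    have e2 : Real.exp (δ/σ) * Real.exp (-1/σ) * Real.exp (-((k:ℝ)+δ)/σ)
        = Real.exp (-((k:ℝ)+1)/σ) := by
      rw [← Real.exp_add, ← Real.exp_add]; congr 1; field_simp; ring
    have hne : σ⁻¹ * Real.exp (-((k:ℝ)+δ)/σ) ≠ 0 := by positivity
    rw [pDGPD0, fGPD0, div_eq_iff hne]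
    have hσ1 : σ * σ⁻¹ = 1 := mul_inv_cancel₀ hσ'
    calc Real.exp (-(k:ℝ)/σ) - Real.exp (-((k:ℝ)+1)/σ)
        = (σ * σ⁻¹) * (Real.exp (δ/σ) * Real.exp (-((k:ℝ)+δ)/σ)
            - Real.exp (δ/σ) * Real.exp (-1/σ) * Real.exp (-((k:ℝ)+δ)/σ)) := by
          rw [hσ1, e1, e2]; ring
      _ = σ * Real.exp (δ/σ) * (1 - Real.exp (-1/σ)) * (σ⁻¹ * Real.exp (-((k:ℝ)+δ)/σ)) := by
          ring
  · intro σ hσ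
    have hσ0 : (0:ℝ) < σ := lt_of_lt_of_le one_pos hσ
    have hσ' : σ ≠ 0 := hσ0.ne'
    have hpos : (0:ℝ) < σ⁻¹ := by positivity
    have hle : σ⁻¹ ≤ 1 := inv_le_one_of_one_le₀ hσ
    have key := aux_main δ σ⁻¹ h0 h1.le hpos hle
    have E1 : Real.exp (δ*σ⁻¹) * (1 - Real.exp (-σ⁻¹)) / σ⁻¹
        = σ * Real.exp (δ/σ) * (1 - Real.exp (-1/σ)) := by
      rw [show δ*σ⁻¹ = δ/σ from (div_eq_mul_inv δ σ).symm,
          show -σ⁻¹ = -1/σ by field_simp, div_inv_eq_mul]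
      ring
    have E2 : 1 + (2*δ-1)*σ⁻¹/2 = 1 + (2*δ-1)/(2*σ) := by
      field_simp
    have E3 : 3*(σ⁻¹)^2 = 3/σ^2 := by
      field_simp
    rw [E1, E2, E3] at key
    exact key
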